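/- Let V be an R-module, 𝐠 = (g₁,…,g_r) ∈ GL(V)^r with g₁⋯g_r = 1, and H_𝐠 ⊆ V^r the submodule of tuples (v₁,…,v_r) with v_i ∈ image(g_i − 1) for all i and v₁(g₂⋯g_r) + v₂(g₃⋯g_r) + ⋯ + v_r = 0. Define Φ(𝐠,β_i) : V^r → V^r by (v₁,…,v_r) ↦ (v₁,…,v_{i-1}, v_{i+1}, v_{i+1}(1 − g_{i+1}^{-1}g_i g_{i+1}) + v_i g_{i+1}, v_{i+2},…,v_r). Then Φ(𝐠,β_i) maps H_𝐠 into H_{𝐠^{β_i}}, where 𝐠^{β_i} = (g₁,…,g_{i+1}, g_{i+1}^{-1}g_i g_{i+1},…,g_r). -/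
import Mathlib


variable {R V : Type*} [CommRing R] [AddCommGroup V] [Module R V]

/-- The right action `v · u` of `u ∈ GL(V)` on `v ∈ V`, with `GL(V)` modelled as units of the
opposite endomorphism ring (so that products of units are row-vector products). -/
def rAct (u : ((Module.End R V)ᵐᵒᵖ)ˣ) (v : V) : V :=
  (MulOpposite.unop u.val) v

/-- The braid operation `𝐠 ↦ 𝐠^{β_i}` on tuples in a group: it replaces the adjacent pair
`(g_i, g_{i+1})` by `(g_{i+1}, g_{i+1}⁻¹ g_i g_{i+1})` and leaves the other entries fixed. -/
def braidAct {G : Type*} [Group G] {r : ℕ} (g : Fin r → G) (i : ℕ) (hi : i + 1 < r) :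
    Fin r → G := fun j =>
  if (j : ℕ) = i then g ⟨i + 1, hi⟩
  else if (j : ℕ) = i + 1 then
    (g ⟨i + 1, hi⟩)⁻¹ * g ⟨i, Nat.lt_of_succ_lt hi⟩ * g ⟨i + 1, hi⟩
  else g j

/-- The braid transformation `Φ(𝐠, β_i)` on tuples of vectors:
`(v₁,…,v_r) ↦ (v₁,…,v_{i-1}, v_{i+1}, v_{i+1}·(1 − g_{i+1}⁻¹g_i g_{i+1}) + v_i·g_{i+1},
v_{i+2},…,v_r)`. -/
def phiBraid {r : ℕ} (g : Fin r → ((Module.End R V)ᵐᵒᵖ)ˣ) (i : ℕ) (hi : i + 1 < r)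
    (v : Fin r → V) : Fin r → V := fun j =>
  if (j : ℕ) = i then v ⟨i + 1, hi⟩
  else if (j : ℕ) = i + 1 then
    (v ⟨i + 1, hi⟩ -
        rAct ((g ⟨i + 1, hi⟩)⁻¹ * g ⟨i, Nat.lt_of_succ_lt hi⟩ * g ⟨i + 1, hi⟩)
          (v ⟨i + 1, hi⟩)) +
      rAct (g ⟨i + 1, hi⟩) (v ⟨i, Nat.lt_of_succ_lt hi⟩)
  else v j

lemma rAct_mul' (a b : ((Module.End R V)ᵐᵒᵖ)ˣ) (v : V) :
    rAct (a * b) v = rAct b (rAct a v) := rfl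

lemma rAct_add' (a : ((Module.End R V)ᵐᵒᵖ)ˣ) (x y : V) :
    rAct a (x + y) = rAct a x + rAct a y := map_add _ _ _

lemma rAct_sub' (a : ((Module.End R V)ᵐᵒᵖ)ˣ) (x y : V) :
    rAct a (x - y) = rAct a x - rAct a y := map_sub _ _ _

lemma dropProd_succ {M : Type*} [Monoid M] {r : ℕ} (g : Fin r → M) (k : ℕ) (hk : k < r) :
    ((List.ofFn g).drop k).prod = g ⟨k, hk⟩ * ((List.ofFn g).drop (k + 1)).prod := by
  rw [List.drop_eq_getElem_cons (by simpa using hk), List.prod_cons]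
  simp

/-- Let `V` be an `R`-module, `𝐠 = (g₁,…,g_r) ∈ GL(V)^r` with `g₁⋯g_r = 1`,
and let `H_𝐠 ⊆ V^r` be the set of tuples `(v₁,…,v_r)` with `v_i ∈ image(g_i − 1)` for all `i`
and `v₁·(g₂⋯g_r) + v₂·(g₃⋯g_r) + ⋯ + v_r = 0`.  Then `Φ(𝐠, β_i)` maps `H_𝐠` into
`H_{𝐠^{β_i}}`. -/
theorem phiBraid_maps_H_to_H {r : ℕ} (g : Fin r → ((Module.End R V)ᵐᵒᵖ)ˣ)
    (i : ℕ) (hi : i + 1 < r)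
    (hg : (List.ofFn g).prod = 1)
    (v : Fin r → V)
    (hv1 : ∀ j : Fin r, ∃ w : V, v j = rAct (g j) w - w)
    (hv2 : ∑ j : Fin r, rAct (((List.ofFn g).drop ((j : ℕ) + 1)).prod) (v j) = 0) :
    (∀ j : Fin r, ∃ w : V, phiBraid g i hi v j = rAct (braidAct g i hi j) w - w) ∧
      ∑ j : Fin r,
        rAct (((List.ofFn (braidAct g i hi)).drop ((j : ℕ) + 1)).prod)
          (phiBraid g i hi v j) = 0 := by
  have hIlt : i < r := Nat.lt_of_succ_lt hi
  have hgmul : g ⟨i + 1, hi⟩ * ((g ⟨i + 1, hi⟩)⁻¹ * g ⟨i, hIlt⟩ * g ⟨i + 1, hi⟩) =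
      g ⟨i, hIlt⟩ * g ⟨i + 1, hi⟩ := by group
  have hphiI1 : phiBraid g i hi v ⟨i + 1, hi⟩ =
      (v ⟨i + 1, hi⟩ -
        rAct ((g ⟨i + 1, hi⟩)⁻¹ * g ⟨i, hIlt⟩ * g ⟨i + 1, hi⟩) (v ⟨i + 1, hi⟩)) +
        rAct (g ⟨i + 1, hi⟩) (v ⟨i, hIlt⟩) := by
    simp [phiBraid]
  have hphiI : phiBraid g i hi v ⟨i, hIlt⟩ = v ⟨i + 1, hi⟩ := by simp [phiBraid]
  have hbI1 : braidAct g i hi ⟨i + 1, hi⟩ =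
      (g ⟨i + 1, hi⟩)⁻¹ * g ⟨i, hIlt⟩ * g ⟨i + 1, hi⟩ := by simp [braidAct]
  constructor
  · intro j
    by_cases hj : (j : ℕ) = i
    · obtain ⟨w, hw⟩ := hv1 ⟨i + 1, hi⟩
      exact ⟨w, by simp [phiBraid, braidAct, hj, hw]⟩
    · by_cases hj1 : (j : ℕ) = i + 1
      · obtain ⟨w, hw⟩ := hv1 ⟨i, hIlt⟩
        have hjeq : j = ⟨i + 1, hi⟩ := Fin.ext hj1
        subst hjeq
        refine ⟨rAct (g ⟨i + 1, hi⟩) w - v ⟨i + 1, hi⟩, ?_⟩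
        have hkey : rAct ((g ⟨i + 1, hi⟩)⁻¹ * g ⟨i, hIlt⟩ * g ⟨i + 1, hi⟩)
            (rAct (g ⟨i + 1, hi⟩) w) = rAct (g ⟨i + 1, hi⟩) (rAct (g ⟨i, hIlt⟩) w) := by
          rw [← rAct_mul', ← rAct_mul', hgmul]
        rw [hphiI1, hbI1, hw,
          rAct_sub' ((g ⟨i + 1, hi⟩)⁻¹ * g ⟨i, hIlt⟩ * g ⟨i + 1, hi⟩)
            (rAct (g ⟨i + 1, hi⟩) w) (v ⟨i + 1, hi⟩),
          hkey]
        simp only [rAct_sub', rAct_add']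
        abel
      · obtain ⟨w, hw⟩ := hv1 j
        exact ⟨w, by simp [phiBraid, braidAct, hj, hj1, hw]⟩
  · have hg'other : ∀ j : Fin r, (j : ℕ) ≠ i → (j : ℕ) ≠ i + 1 →
        braidAct g i hi j = g j := by
      intro j h1 h2; simp [braidAct, h1, h2]
    have hdrop2 : (List.ofFn (braidAct g i hi)).drop (i + 2) =
        (List.ofFn g).drop (i + 2) := by
      apply List.ext_getElem
      · simp
      · intro n h1 h2
        have hn : i + 2 + n < r := by simp at h1; omega
        simp only [List.getElem_drop, List.getElem_ofFn]
        exact hg'other ⟨i + 2 + n, by simpa using hn⟩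
          (by show i + 2 + n ≠ i; omega) (by show i + 2 + n ≠ i + 1; omega)
    have hge : ∀ k, i + 2 ≤ k → (List.ofFn (braidAct g i hi)).drop k =
        (List.ofFn g).drop k := by
      intro k hk
      have e : ∀ (l : List ((Module.End R V)ᵐᵒᵖ)ˣ),
          l.drop k = (l.drop (i + 2)).drop (k - (i + 2)) := by
        intro l; rw [List.drop_drop]; congr 1; omega
      rw [e, e, hdrop2]
    have hQ1 : ((List.ofFn (braidAct g i hi)).drop (i + 1)).prod =
        ((g ⟨i + 1, hi⟩)⁻¹ * g ⟨i, hIlt⟩ * g ⟨i + 1, hi⟩) *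
          ((List.ofFn g).drop (i + 2)).prod := by
      rw [dropProd_succ (braidAct g i hi) (i + 1) hi, hge (i + 2) le_rfl, hbI1]
    have hle : ∀ k, k ≤ i → ((List.ofFn (braidAct g i hi)).drop k).prod =
        ((List.ofFn g).drop k).prod := by
      have base : ((List.ofFn (braidAct g i hi)).drop i).prod =
          ((List.ofFn g).drop i).prod := by
        rw [dropProd_succ (braidAct g i hi) i hIlt, dropProd_succ g i hIlt,
            dropProd_succ g (i + 1) hi, hQ1,
            show braidAct g i hi ⟨i, hIlt⟩ = g ⟨i + 1, hi⟩ from by simp [braidAct],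
            show i + 1 + 1 = i + 2 from rfl, ← mul_assoc, hgmul, mul_assoc]
      have key : ∀ d k, k + d = i → ((List.ofFn (braidAct g i hi)).drop k).prod =
          ((List.ofFn g).drop k).prod := by
        intro d
        induction d with
        | zero =>
          intro k hk
          have hki : k = i := by omega
          subst hki
          exact base
        | succ n ih =>
          intro k hk
          have hkr : k < r := by omega
          rw [dropProd_succ (braidAct g i hi) k hkr, dropProd_succ g k hkr,
              ih (k + 1) (by omega),
              hg'other ⟨k, hkr⟩ (by show k ≠ i; omega) (by show k ≠ i + 1; omega)]
      intro k hk
      exact key (i - k) k (by omega)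
    have hII1 : (⟨i, hIlt⟩ : Fin r) ≠ ⟨i + 1, hi⟩ := by simp [Fin.ext_iff]
    have e1 : ∀ (F : Fin r → V), ∑ j, F j =
        (∑ j ∈ (Finset.univ.erase (⟨i, hIlt⟩ : Fin r)).erase ⟨i + 1, hi⟩, F j
          + F ⟨i + 1, hi⟩) + F ⟨i, hIlt⟩ := by
      intro F
      rw [Finset.sum_erase_add _ _ (Finset.mem_erase.mpr ⟨hII1.symm, Finset.mem_univ _⟩),
          Finset.sum_erase_add _ _ (Finset.mem_univ _)]
    have hoff : ∀ j ∈ (Finset.univ.erase (⟨i, hIlt⟩ : Fin r)).erase ⟨i + 1, hi⟩,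
        rAct (((List.ofFn (braidAct g i hi)).drop ((j : ℕ) + 1)).prod)
            (phiBraid g i hi v j) =
          rAct (((List.ofFn g).drop ((j : ℕ) + 1)).prod) (v j) := by
      intro j hj
      rw [Finset.mem_erase, Finset.mem_erase] at hj
      have h1 : (j : ℕ) ≠ i + 1 := fun h => hj.1 (Fin.ext h)
      have h2 : (j : ℕ) ≠ i := fun h => hj.2.1 (Fin.ext h)
      have hphi : phiBraid g i hi v j = v j := by simp [phiBraid, h1, h2]
      have hP : ((List.ofFn (braidAct g i hi)).drop ((j : ℕ) + 1)).prod =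
          ((List.ofFn g).drop ((j : ℕ) + 1)).prod := by
        rcases Nat.lt_or_ge (j : ℕ) i with h | h
        · exact hle _ (by omega)
        · rw [hge ((j : ℕ) + 1) (by omega)]
      rw [hphi, hP]
    have hpair :
        rAct (((List.ofFn (braidAct g i hi)).drop (i + 1 + 1)).prod)
            (phiBraid g i hi v ⟨i + 1, hi⟩) +
          rAct (((List.ofFn (braidAct g i hi)).drop (i + 1)).prod)
            (phiBraid g i hi v ⟨i, hIlt⟩) =
        rAct (((List.ofFn g).drop (i + 1 + 1)).prod) (v ⟨i + 1, hi⟩) +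
          rAct (((List.ofFn g).drop (i + 1)).prod) (v ⟨i, hIlt⟩) := by
      rw [hphiI1, hphiI, dropProd_succ g (i + 1) hi,
        show i + 1 + 1 = i + 2 from rfl, hge (i + 2) le_rfl, hQ1]
      simp only [rAct_mul', rAct_sub', rAct_add']
      abel
    rw [e1]
    rw [e1] at hv2
    simp only [Fin.val_mk] at hv2 ⊢
    rw [Finset.sum_congr rfl hoff, add_assoc, hpair, ← add_assoc]
    exact hv2
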